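/- (Kuratowski–Ryll-Nardzewski selection theorem) Every weakly measurable correspondence F : T → 2^Y with nonempty closed values from a measurable space (T, 𝒯) into a Polish space Y admits a measurable selector, i.e., a measurable function f : T → Y with f(t) ∈ F(t) for all t ∈ T. -/

import Mathlib

open Metric Filter Topology TopologicalSpace

/-- Kuratowski–Ryll-Nardzewski selection theorem. -/
theorem stmt_8 {T Y : Type*} [MeasurableSpace T]
    [TopologicalSpace Y] [PolishSpace Y] [MeasurableSpace Y] [BorelSpace Y]
    (F : T → Set Y)
    (hne : ∀ t, (F t).Nonempty) (hclosed : ∀ t, IsClosed (F t))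
    (hweak : ∀ U : Set Y, IsOpen U → MeasurableSet {t : T | (F t ∩ U).Nonempty}) :
    ∃ f : T → Y, Measurable f ∧ ∀ t : T, f t ∈ F t := by
  classical
  rcases isEmpty_or_nonempty T with hT | hT
  · exact ⟨fun t => (hne t).choose, measurable_of_empty _, fun t => (hne t).choose_spec⟩
  letI := upgradeIsCompletelyMetrizable Y
  have hY : Nonempty Y := ⟨(hne (Classical.arbitrary T)).choose⟩
  obtain ⟨u, hu⟩ := TopologicalSpace.exists_dense_seq Y
  have hpow : ∀ k : ℕ, (0 : ℝ) < (2 : ℝ)⁻¹ ^ k := fun k => pow_pos (by norm_num) k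
  -- base function
  have hbase : ∀ t, ∃ n, (F t ∩ ball (u n) ((2 : ℝ)⁻¹ ^ 0)).Nonempty := by
    intro t
    obtain ⟨y, hy⟩ := hne t
    obtain ⟨n, hn⟩ := hu.exists_dist_lt y (hpow 0)
    exact ⟨n, y, hy, by rwa [mem_ball]⟩
  have hg0m : Measurable fun t => u (Nat.find (hbase t)) :=
    measurable_from_top.comp (measurable_find hbase fun n => hweak _ isOpen_ball)
  have hg0i : ∀ t, infDist (u (Nat.find (hbase t))) (F t) < (2 : ℝ)⁻¹ ^ 0 := by
    intro t
    obtain ⟨y, hyF, hyb⟩ := Nat.find_spec (hbase t)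
    exact lt_of_le_of_lt (infDist_le_dist_of_mem hyF) (by rwa [dist_comm, ← mem_ball])
  -- inductive step
  have key : ∀ (k : ℕ) (g : T → Y), Measurable g →
      (∀ t, infDist (g t) (F t) < (2 : ℝ)⁻¹ ^ k) →
      ∃ g' : T → Y, Measurable g' ∧ (∀ t, infDist (g' t) (F t) < (2 : ℝ)⁻¹ ^ (k + 1)) ∧
        ∀ t, dist (g' t) (g t) < (2 : ℝ)⁻¹ ^ k + (2 : ℝ)⁻¹ ^ (k + 1) := by
    intro k g hg hinv
    have hp : ∀ t, ∃ n, (F t ∩ ball (u n) ((2 : ℝ)⁻¹ ^ (k + 1))).Nonempty ∧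
        dist (u n) (g t) < (2 : ℝ)⁻¹ ^ k + (2 : ℝ)⁻¹ ^ (k + 1) := by
      intro t
      obtain ⟨y, hyF, hy⟩ := (infDist_lt_iff (hne t)).1 (hinv t)
      obtain ⟨n, hn⟩ := hu.exists_dist_lt y (hpow (k + 1))
      refine ⟨n, ⟨y, hyF, by rwa [mem_ball]⟩, ?_⟩
      calc dist (u n) (g t) ≤ dist (u n) y + dist y (g t) := dist_triangle _ _ _
        _ < (2 : ℝ)⁻¹ ^ (k + 1) + (2 : ℝ)⁻¹ ^ k := by
            rw [dist_comm (u n) y, dist_comm y (g t)]; exact add_lt_add hn hy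
        _ = (2 : ℝ)⁻¹ ^ k + (2 : ℝ)⁻¹ ^ (k + 1) := add_comm _ _
    refine ⟨fun t => u (Nat.find (hp t)),
      measurable_from_top.comp (measurable_find hp fun n => ?_), ?_, ?_⟩
    · have : {t | (F t ∩ ball (u n) ((2 : ℝ)⁻¹ ^ (k + 1))).Nonempty ∧
          dist (u n) (g t) < (2 : ℝ)⁻¹ ^ k + (2 : ℝ)⁻¹ ^ (k + 1)} =
          {t | (F t ∩ ball (u n) ((2 : ℝ)⁻¹ ^ (k + 1))).Nonempty} ∩
          g ⁻¹' (ball (u n) ((2 : ℝ)⁻¹ ^ k + (2 : ℝ)⁻¹ ^ (k + 1))) := by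
        ext t; simp [mem_ball, dist_comm]
      rw [this]
      exact (hweak _ isOpen_ball).inter (measurableSet_ball.preimage hg)
    · intro t
      obtain ⟨⟨y, hyF, hyb⟩, -⟩ := Nat.find_spec (hp t)
      exact lt_of_le_of_lt (infDist_le_dist_of_mem hyF) (by rwa [dist_comm, ← mem_ball])
    · intro t
      exact (Nat.find_spec (hp t)).2
  choose step hstep_meas hstep_inv hstep_dist using key
  let seq : ∀ k : ℕ,
      {g : T → Y // Measurable g ∧ ∀ t, infDist (g t) (F t) < (2 : ℝ)⁻¹ ^ k} :=
    fun k => Nat.rec ⟨fun t => u (Nat.find (hbase t)), hg0m, hg0i⟩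
      (fun k p => ⟨step k p.1 p.2.1 p.2.2,
        hstep_meas k p.1 p.2.1 p.2.2, hstep_inv k p.1 p.2.1 p.2.2⟩) k
  have hdist : ∀ k t, dist ((seq (k + 1)).1 t) ((seq k).1 t) <
      (2 : ℝ)⁻¹ ^ k + (2 : ℝ)⁻¹ ^ (k + 1) :=
    fun k t => hstep_dist k (seq k).1 (seq k).2.1 (seq k).2.2 t
  -- Cauchy and limit
  have hcauchy : ∀ t, CauchySeq fun k => (seq k).1 t := by
    intro t
    refine cauchySeq_of_le_geometric (2 : ℝ)⁻¹ 2 (by norm_num) fun k => ?_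
    rw [dist_comm]
    refine le_trans (hdist k t).le ?_
    have : (2 : ℝ)⁻¹ ^ (k + 1) ≤ (2 : ℝ)⁻¹ ^ k :=
      pow_le_pow_of_le_one (by norm_num) (by norm_num) (Nat.le_succ k)
    nlinarith [hpow k]
  have hlim : ∀ t, ∃ y, Tendsto (fun k => (seq k).1 t) atTop (𝓝 y) :=
    fun t => cauchySeq_tendsto_of_complete (hcauchy t)
  choose f hf using hlim
  refine ⟨f, ?_, ?_⟩
  · exact measurable_of_tendsto_metrizable (fun k => (seq k).2.1) (tendsto_pi_nhds.2 hf)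
  · intro t
    have h1 : Tendsto (fun k => infDist ((seq k).1 t) (F t)) atTop
        (𝓝 (infDist (f t) (F t))) :=
      ((continuous_infDist_pt (F t)).tendsto _).comp (hf t)
    have h2 : Tendsto (fun k => infDist ((seq k).1 t) (F t)) atTop (𝓝 0) := by
      refine squeeze_zero (fun k => infDist_nonneg) (fun k => ((seq k).2.2 t).le) ?_
      exact tendsto_pow_atTop_nhds_zero_of_lt_one (by norm_num) (by norm_num)
    exact ((hclosed t).mem_iff_infDist_zero (hne t)).2 (tendsto_nhds_unique h1 h2)
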